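/- arXiv:1801.07062 — 2 statements merged into one kernel-verified Lean document; each statement's English description precedes it below -/
import Mathlib

section
/- Let $d > 2$ be an integer and let $\phi \in C^1(\mathbb{R}^+;\mathbb{R}^+)$ satisfy $\max_{r\ge 0}\phi(r)=\phi(0)$ and $\max_{r\ge 0}|r\phi(r)|=A_\infty<\infty$. Suppose $\rho, v : [0,\infty)\to\mathbb{R}$ are $C^1$ with $\rho(0)=a>0$, $v(0)=0$, $v'(r)=r^{d-1}\rho(r)$, and $\rho'(r)=-\rho(r)\frac{v(r)}{r^{d-1}}\phi(\frac{v(r)}{r^{d-1}})$ for $r>0$. Then $\int_0^\infty r^{d-1}\rho(r)\,dr = +\infty$; i.e., there is no radially symmetric positive steady state with finite mass. -/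
open Real Set MeasureTheory Filter Topology

/-- In dimension `d > 2` there is no radially symmetric positive steady state with
finite mass: the mass integral `∫_0^∞ r^{d-1} ρ(r) dr` diverges. -/
theorem stmt_1 (d : ℕ) (hd : 2 < d) (φ ρ v : ℝ → ℝ) (Ainf a : ℝ)
    (hφC1 : ContDiffOn ℝ 1 φ (Ici 0)) (hφnn : ∀ r ≥ 0, 0 ≤ φ r)
    (hφmax : ∀ r ≥ 0, φ r ≤ φ 0) (hAinf : ∀ r ≥ 0, |r * φ r| ≤ Ainf)
    (ha : 0 < a) (hρ0 : ρ 0 = a) (hv0 : v 0 = 0)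
    (hρC : ContinuousOn ρ (Ici 0)) (hvC : ContinuousOn v (Ici 0))
    (hρC1 : ContDiffOn ℝ 1 ρ (Ici 0)) (hvC1 : ContDiffOn ℝ 1 v (Ici 0))
    (hv' : ∀ r > 0, HasDerivAt v (r ^ (d - 1) * ρ r) r)
    (hρ' : ∀ r > 0,
      HasDerivAt ρ (-(ρ r * (v r / r ^ (d - 1)) * φ (v r / r ^ (d - 1)))) r) :
    ¬ IntegrableOn (fun r => r ^ (d - 1) * ρ r) (Ioi (0 : ℝ)) := by
  intro hI
  have hAinf0 : (0:ℝ) ≤ Ainf := by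
    have h := hAinf 0 le_rfl
    exact le_trans (abs_nonneg ((0:ℝ) * φ 0)) h
  have hφ0 : (0:ℝ) ≤ φ 0 := hφnn 0 le_rfl
  have hpow : ∀ x : ℝ, 0 < x → (0:ℝ) < x ^ (d-1) := fun x hx => pow_pos hx _
  -- Step A: ρ is positive on [0, ∞)
  have hρpos : ∀ r, 0 ≤ r → 0 < ρ r := by
    by_contra hcon
    push_neg at hcon
    obtain ⟨t0, ht0, hρt0⟩ := hcon
    have hSclosed : IsClosed (Ici 0 ∩ ρ ⁻¹' (Iic 0)) :=
      hρC.preimage_isClosed_of_isClosed isClosed_Ici isClosed_Iic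
    have hSne : (Ici 0 ∩ ρ ⁻¹' (Iic 0)).Nonempty := ⟨t0, ht0, hρt0⟩
    have hSbdd : BddBelow (Ici 0 ∩ ρ ⁻¹' (Iic 0)) := ⟨0, fun x hx => hx.1⟩
    set t := sInf (Ici 0 ∩ ρ ⁻¹' (Iic 0)) with htdef
    have htS : t ∈ Ici 0 ∩ ρ ⁻¹' (Iic 0) := hSclosed.csInf_mem hSne hSbdd
    have ht0' : (0:ℝ) ≤ t := htS.1
    have hρt : ρ t ≤ 0 := htS.2
    have htpos : 0 < t := by
      rcases lt_or_eq_of_le ht0' with h | h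
      · exact h
      · exfalso; rw [← h, hρ0] at hρt; linarith
    have hlt : ∀ x, 0 ≤ x → x < t → 0 < ρ x := by
      intro x hx hxt
      by_contra hx2
      push_neg at hx2
      exact absurd (csInf_le hSbdd ⟨hx, hx2⟩) (not_le.2 hxt)
    have hvmono : MonotoneOn v (Icc 0 t) := by
      apply monotoneOn_of_deriv_nonneg (convex_Icc 0 t) (hvC.mono Icc_subset_Ici_self)
      · intro y hy
        rw [interior_Icc] at hy
        exact (hv' y hy.1).differentiableAt.differentiableWithinAt
      · intro y hy
        rw [interior_Icc] at hy
        rw [(hv' y hy.1).deriv]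
        exact mul_nonneg (hpow y hy.1).le (hlt y hy.1.le hy.2).le
    have hvnn : ∀ x ∈ Icc (0:ℝ) t, 0 ≤ v x := by
      intro x hx
      have := hvmono ⟨le_rfl, ht0'⟩ hx hx.1
      rwa [hv0] at this
    have hder : ∀ y : ℝ, 0 < y → HasDerivAt (fun r => ρ r * Real.exp (Ainf * r))
        (-(ρ y * (v y / y ^ (d-1)) * φ (v y / y ^ (d-1))) * Real.exp (Ainf * y)
          + ρ y * (Real.exp (Ainf * y) * (Ainf * 1))) y := by
      intro y hy
      exact (hρ' y hy).mul (((hasDerivAt_id y).const_mul Ainf).exp)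
    have hfmono : MonotoneOn (fun r => ρ r * Real.exp (Ainf * r)) (Icc 0 t) := by
      apply monotoneOn_of_deriv_nonneg (convex_Icc 0 t)
      · exact (hρC.mono Icc_subset_Ici_self).mul (by fun_prop)
      · intro y hy
        rw [interior_Icc] at hy
        exact (hder y hy.1).differentiableAt.differentiableWithinAt
      · intro y hy
        rw [interior_Icc] at hy
        rw [(hder y hy.1).deriv]
        have hw0 : 0 ≤ v y / y ^ (d-1) :=
          div_nonneg (hvnn y ⟨hy.1.le, hy.2.le⟩) (hpow y hy.1).le
        have hwφ : (v y / y ^ (d-1)) * φ (v y / y ^ (d-1)) ≤ Ainf :=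
          le_trans (le_abs_self _) (hAinf _ hw0)
        have hρy : 0 ≤ ρ y := (hlt y hy.1.le hy.2).le
        have hE : 0 < Real.exp (Ainf * y) := Real.exp_pos _
        nlinarith [mul_nonneg (mul_nonneg hρy hE.le) (sub_nonneg.2 hwφ)]
    have h1 : a * Real.exp (Ainf * 0) ≤ ρ t * Real.exp (Ainf * t) := by
      simpa [hρ0] using hfmono ⟨le_rfl, ht0'⟩ ⟨ht0', le_rfl⟩ ht0'
    have hE0 : Real.exp (Ainf * 0) = 1 := by simp
    nlinarith [Real.exp_pos (Ainf * t)]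
  -- Step B: v is nonneg and bounded by the mass M
  have hvmono : MonotoneOn v (Ici 0) := by
    apply monotoneOn_of_deriv_nonneg (convex_Ici 0) hvC
    · intro y hy; rw [interior_Ici] at hy
      exact (hv' y hy).differentiableAt.differentiableWithinAt
    · intro y hy; rw [interior_Ici] at hy
      rw [(hv' y hy).deriv]
      exact mul_nonneg (hpow y hy).le (hρpos y hy.le).le
  have hvnn : ∀ r, 0 ≤ r → 0 ≤ v r := by
    intro r hr
    have := hvmono self_mem_Ici hr hr
    rwa [hv0] at this
  have hint_nonneg : 0 ≤ᶠ[ae (volume.restrict (Ioi (0:ℝ)))] fun x => x ^ (d-1) * ρ x := by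
    filter_upwards [ae_restrict_mem measurableSet_Ioi] with x hx
    exact mul_nonneg (hpow x hx).le (hρpos x hx.le).le
  set M := ∫ r in Ioi (0:ℝ), r ^ (d-1) * ρ r with hMdef
  have hM0 : 0 ≤ M := setIntegral_nonneg measurableSet_Ioi
    (fun x hx => mul_nonneg (hpow x hx).le (hρpos x (le_of_lt hx)).le)
  have hvM : ∀ r, 0 < r → v r ≤ M := by
    intro r hr
    have hev : ∀ᶠ ε in 𝓝[>] (0:ℝ), v r - M ≤ v ε := by
      filter_upwards [Ioo_mem_nhdsGT_of_mem (⟨le_rfl, hr⟩ : (0:ℝ) ∈ Ico 0 r)] with ε hε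
      have hsub : uIcc ε r ⊆ Ici 0 := by
        rw [uIcc_of_le hε.2.le]
        exact fun x hx => le_trans hε.1.le hx.1
      have hFTC : ∫ x in ε..r, x ^ (d-1) * ρ x = v r - v ε := by
        apply intervalIntegral.integral_eq_sub_of_hasDerivAt
        · intro x hx
          rw [uIcc_of_le hε.2.le] at hx
          exact hv' x (lt_of_lt_of_le hε.1 hx.1)
        · exact (((continuous_pow (d-1)).continuousOn).mul (hρC.mono hsub)).intervalIntegrable
      have hle2 : ∫ x in ε..r, x ^ (d-1) * ρ x ≤ M := by
        rw [intervalIntegral.integral_of_le hε.2.le]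
        exact setIntegral_mono_set hI hint_nonneg
          ((Ioc_subset_Ioi_self.trans (Ioi_subset_Ioi hε.1.le)).eventuallyLE)
      linarith [hFTC ▸ hle2]
    have htend : Tendsto v (𝓝[>] (0:ℝ)) (𝓝 (v 0)) :=
      ((hvC 0 self_mem_Ici).tendsto).mono_left (nhdsWithin_mono 0 Ioi_subset_Ici_self)
    have := ge_of_tendsto htend hev
    rw [hv0] at this
    linarith
  -- Step C: lower bound for ρ on [1, ∞)
  have hd2R : (0:ℝ) < (d:ℝ) - 2 := by
    have : (2:ℝ) < d := by exact_mod_cast hd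
    linarith
  have hne : ((d:ℝ) - 2) ≠ 0 := hd2R.ne'
  set K := M * φ 0 with hKdef
  have hK0 : 0 ≤ K := mul_nonneg hM0 hφ0
  set C := K / ((d:ℝ) - 2) with hCdef
  have hC0 : 0 ≤ C := div_nonneg hK0 hd2R.le
  set p : ℝ := 2 - d with hp
  have hgder : ∀ y : ℝ, 0 < y → HasDerivAt (fun r : ℝ => ρ r * Real.exp (-(C * r ^ p)))
      (-(ρ y * (v y / y ^ (d-1)) * φ (v y / y ^ (d-1))) * Real.exp (-(C * y ^ p))
        + ρ y * (Real.exp (-(C * y ^ p)) * (-(C * (p * y ^ (p-1)))))) y := by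
    intro y hy
    have h1 : HasDerivAt (fun r : ℝ => -(C * r ^ p)) (-(C * (p * y ^ (p-1)))) y :=
      ((Real.hasDerivAt_rpow_const (Or.inl hy.ne')).const_mul C).neg
    exact (hρ' y hy).mul h1.exp
  have hgmono : MonotoneOn (fun r : ℝ => ρ r * Real.exp (-(C * r ^ p))) (Ici 1) := by
    apply monotoneOn_of_deriv_nonneg (convex_Ici 1)
    · apply (hρC.mono (Ici_subset_Ici.mpr zero_le_one)).mul
      apply Real.continuous_exp.comp_continuousOn
      apply ContinuousOn.neg
      apply continuousOn_const.mul
      exact continuousOn_id.rpow_const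
        (fun x hx => Or.inl (ne_of_gt (lt_of_lt_of_le one_pos hx)))
    · intro y hy
      rw [interior_Ici] at hy
      exact (hgder y (lt_trans one_pos hy)).differentiableAt.differentiableWithinAt
    · intro y hy
      rw [interior_Ici] at hy
      have hy0 : (0:ℝ) < y := lt_trans one_pos hy
      rw [(hgder y hy0).deriv]
      have hpowy := hpow y hy0
      have hw0 : 0 ≤ v y / y ^ (d-1) := div_nonneg (hvnn y hy0.le) hpowy.le
      have hwle : v y / y ^ (d-1) ≤ M / y ^ (d-1) := by
        exact (div_le_div_iff_of_pos_right hpowy).mpr (hvM y hy0)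
      have hrpow : y ^ (p - 1) = ((y ^ (d-1) : ℝ))⁻¹ := by
        rw [show p - 1 = -((d:ℝ) - 1) by rw [hp]; ring]
        rw [Real.rpow_neg hy0.le]
        congr 1
        rw [show ((d:ℝ) - 1) = ((d - 1 : ℕ) : ℝ) by
          rw [Nat.cast_sub (by omega : 1 ≤ d)]; simp]
        exact Real.rpow_natCast y (d-1)
      have hcle : (v y / y ^ (d-1)) * φ (v y / y ^ (d-1)) ≤ K * y ^ (p-1) := by
        have h1 : φ (v y / y ^ (d-1)) ≤ φ 0 := hφmax _ hw0
        have h2 : 0 ≤ φ (v y / y ^ (d-1)) := hφnn _ hw0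
        calc (v y / y ^ (d-1)) * φ (v y / y ^ (d-1))
            ≤ (M / y ^ (d-1)) * φ 0 :=
              mul_le_mul hwle h1 h2 (div_nonneg hM0 hpowy.le)
          _ = K * ((y ^ (d-1) : ℝ))⁻¹ := by rw [hKdef, div_eq_mul_inv]; ring
          _ = K * y ^ (p-1) := by rw [hrpow]
      have hCp : -(C * (p * y ^ (p-1))) = K * y ^ (p-1) := by
        rw [hCdef, hp]; field_simp; ring
      rw [hCp]
      have hE : 0 < Real.exp (-(C * y ^ p)) := Real.exp_pos _
      have hρy : 0 ≤ ρ y := (hρpos y hy0.le).le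
      nlinarith [mul_nonneg (mul_nonneg hρy hE.le) (sub_nonneg.2 hcle)]
  have hε : (0:ℝ) < ρ 1 * Real.exp (-C) := mul_pos (hρpos 1 zero_le_one) (Real.exp_pos _)
  have hlow : ∀ r : ℝ, 1 ≤ r → ρ 1 * Real.exp (-C) ≤ ρ r := by
    intro r hr
    have h1 := hgmono self_mem_Ici (mem_Ici.2 hr) hr
    have hg1 : ρ (1:ℝ) * Real.exp (-(C * (1:ℝ) ^ p)) = ρ 1 * Real.exp (-C) := by
      rw [Real.one_rpow, mul_one]
    have hEle : Real.exp (-(C * r ^ p)) ≤ 1 := by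
      rw [Real.exp_le_one_iff]
      exact neg_nonpos.2 (mul_nonneg hC0 (Real.rpow_nonneg (by linarith) p))
    have hρr : 0 < ρ r := hρpos r (by linarith)
    calc ρ 1 * Real.exp (-C) = ρ 1 * Real.exp (-(C * (1:ℝ) ^ p)) := hg1.symm
      _ ≤ ρ r * Real.exp (-(C * r ^ p)) := h1
      _ ≤ ρ r * 1 := by nlinarith
      _ = ρ r := mul_one _
  -- Step D: contradiction with integrability
  have hIcontra : Integrable (fun _ : ℝ => ρ 1 * Real.exp (-C))
      (volume.restrict (Ioi (1:ℝ))) := by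
    apply Integrable.mono' (hI.mono_set (Ioi_subset_Ioi zero_le_one)) aestronglyMeasurable_const
    filter_upwards [ae_restrict_mem measurableSet_Ioi] with x hx
    have hx1 : (1:ℝ) < x := hx
    have h1 : ρ 1 * Real.exp (-C) ≤ ρ x := hlow x hx1.le
    have h2 : (1:ℝ) ≤ x ^ (d-1) := by
      calc (1:ℝ) = 1 ^ (d-1) := (one_pow _).symm
        _ ≤ x ^ (d-1) := pow_le_pow_left₀ zero_le_one hx1.le _
    have hρx : 0 < ρ x := hρpos x (by linarith)
    rw [Real.norm_eq_abs, abs_of_pos hε]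
    nlinarith
  rw [integrable_const_iff] at hIcontra
  rcases hIcontra with h | h
  · exact absurd h hε.ne'
  · replace h := h.measure_univ_lt_top
    rw [Measure.restrict_apply_univ, Real.volume_Ioi] at h
    exact lt_irrefl _ h
end

section
/- Let $\phi \in C^1(\mathbb{R}^+;\mathbb{R}^+)$ satisfy $\max_{r\ge 0}\phi(r)=\phi(0)>0$. Let $v : [0,\infty)\to\mathbb{R}$ be a $C^2$ solution of $r v''(r) = v'(r)\big(1 - v(r)\phi(v(r)/r)\big)$ for $r>0$ with $v(0)=v'(0)=0$, $v''(0)=a>0$, and $v(r)>0$ for $r>0$. Then $v'(r) > 0$ for all $r > 0$. -/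
open Real Set MeasureTheory Filter Topology

/-- Every positive solution of the 2D radial stationary FLKS ODE
`r v'' = v'(1 - v φ(v/r))` with `v(0)=v'(0)=0`, `v''(0)=a>0` is strictly increasing. -/
theorem stmt_2 (φ v : ℝ → ℝ) (a : ℝ)
    (hφC1 : ContDiffOn ℝ 1 φ (Ici 0)) (hφnn : ∀ r ≥ 0, 0 ≤ φ r)
    (hφmax : ∀ r ≥ 0, φ r ≤ φ 0) (hφ0 : 0 < φ 0)
    (hvC2 : ContDiffOn ℝ 2 v (Ici 0))
    (hode : ∀ r > 0, r * deriv (deriv v) r = deriv v r * (1 - v r * φ (v r / r)))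
    (hv0 : v 0 = 0) (hv'0 : deriv v 0 = 0) (hv''0 : deriv (deriv v) 0 = a)
    (ha : 0 < a) (hvpos : ∀ r > 0, 0 < v r) :
    ∀ r > 0, 0 < deriv v r := by
  set w := deriv v with hw
  -- regularity of w on Ioi 0
  have hwC1 : ContDiffOn ℝ 1 w (Ioi 0) := by
    have : ContDiffOn ℝ 2 v (Ioi 0) := hvC2.mono Ioi_subset_Ici_self
    exact this.deriv_of_isOpen isOpen_Ioi (by norm_num)
  have hwdiff : ∀ r ∈ Ioi 0, DifferentiableAt ℝ w r := fun r hr =>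
    (hwC1.differentiableOn one_ne_zero).differentiableAt (isOpen_Ioi.mem_nhds hr)
  have hwcont : ContinuousOn w (Ioi 0) := hwC1.continuousOn
  -- the derivative identity
  set g : ℝ → ℝ := fun r => (1 - v r * φ (v r / r)) / r with hg
  have hderiv : ∀ r ∈ Ioi 0, HasDerivAt w (w r * g r) r := by
    intro r hr
    have h1 := (hwdiff r hr).hasDerivAt
    have h2 := hode r hr
    have hr0 : (r : ℝ) ≠ 0 := ne_of_gt hr
    have : deriv w r = w r * g r := by
      rw [hg]; field_simp; linarith [h2]
    rwa [this] at h1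
  -- w > 0 near 0
  have hda : DifferentiableAt ℝ w 0 := by
    by_contra h
    rw [deriv_zero_of_not_differentiableAt h] at hv''0
    exact ha.ne' hv''0.symm
  have hslope : Tendsto (slope w 0) (𝓝[≠] 0) (𝓝 a) := by
    have : HasDerivAt w a 0 := by
      have := hda.hasDerivAt; rwa [hv''0] at this
    exact hasDerivAt_iff_tendsto_slope.1 this
  have hev : ∀ᶠ r in 𝓝[>] (0:ℝ), 0 < slope w 0 r :=
    (hslope.mono_left (nhdsWithin_mono 0 fun x hx => hx.out.ne')).eventually_const_lt ha
  obtain ⟨δ, hδpos, hδ⟩ : ∃ δ > 0, ∀ r ∈ Ioo (0:ℝ) δ, 0 < w r := by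
    rw [eventually_nhdsWithin_iff] at hev
    obtain ⟨u, hu0, hsub⟩ := Metric.eventually_nhds_iff.1 hev
    refine ⟨u, hu0, fun r hr => ?_⟩
    have h := hsub (show dist r 0 < u by
      simpa [Real.dist_eq, abs_of_pos hr.1] using hr.2) hr.1
    have hsl : 0 < w r / r := by simpa [slope_def_field, hv'0] using h
    have hmul := mul_pos hsl hr.1
    rwa [div_mul_cancel₀ _ (ne_of_gt hr.1)] at hmul
  -- main contradiction argument
  by_contra hcon
  push_neg at hcon
  obtain ⟨r₁, hr₁pos, hr₁⟩ := hcon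
  set S : Set ℝ := {r | 0 < r ∧ w r ≤ 0} with hS
  have hSne : S.Nonempty := ⟨r₁, hr₁pos, hr₁⟩
  have hSbdd : BddBelow S := ⟨0, fun s hs => le_of_lt hs.1⟩
  set r₀ := sInf S with hr₀
  have hr₀lb : δ ≤ r₀ := le_csInf hSne (by
    intro s hs
    by_contra hlt
    push_neg at hlt
    exact absurd (hδ s ⟨hs.1, hlt⟩) (not_lt.2 hs.2))
  have hr₀pos : 0 < r₀ := lt_of_lt_of_le hδpos hr₀lb
  have hwpos : ∀ r, 0 < r → r < r₀ → 0 < w r := by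
    intro r hr hrlt
    by_contra h
    push_neg at h
    exact absurd (csInf_le hSbdd ⟨hr, h⟩) (not_le.2 hrlt)
  have hwr₀ : w r₀ ≤ 0 := by
    by_contra h
    push_neg at h
    have hc : ContinuousAt w r₀ := (hwcont.continuousAt (isOpen_Ioi.mem_nhds hr₀pos))
    obtain ⟨η, hηpos, hη⟩ := Metric.continuousAt_iff.1 hc (w r₀) h
    obtain ⟨s, hsS, hslt⟩ := (csInf_lt_iff hSbdd hSne).1 (lt_add_of_pos_right r₀ hηpos)
    have hdist : dist s r₀ < η := by
      rw [Real.dist_eq, abs_sub_lt_iff]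
      constructor <;> [linarith [csInf_le hSbdd hsS]; linarith [csInf_le hSbdd hsS]]
    have := hη hdist
    rw [Real.dist_eq, abs_sub_lt_iff] at this
    linarith [hsS.2]
  -- set up Grönwall via exponential trick on [ε, r₀]
  set ε := δ / 2 with hε
  have hεpos : 0 < ε := by positivity
  have hεlt : ε < r₀ := lt_of_lt_of_le (by linarith) hr₀lb
  have hwε : 0 < w ε := hδ ε ⟨hεpos, by linarith⟩
  have hIcc : Icc ε r₀ ⊆ Ioi 0 := fun x hx => lt_of_lt_of_le hεpos hx.1
  -- bound on g
  have hgcont : ContinuousOn g (Icc ε r₀) := by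
    have hvc : ContinuousOn v (Icc ε r₀) :=
      (hvC2.continuousOn).mono (fun x hx => mem_Ici.2 (le_of_lt (hIcc hx)))
    have hid : ContinuousOn (fun r : ℝ => r) (Icc ε r₀) := continuousOn_id
    have hdivc : ContinuousOn (fun r => v r / r) (Icc ε r₀) :=
      hvc.div hid (fun x hx => ne_of_gt (hIcc hx))
    have hφc : ContinuousOn (fun r => φ (v r / r)) (Icc ε r₀) := by
      apply (hφC1.continuousOn).comp hdivc
      intro x hx
      exact le_of_lt (div_pos (hvpos x (hIcc hx)) (hIcc hx))
    exact ((continuousOn_const.sub (hvc.mul hφc)).div hid (fun x hx => ne_of_gt (hIcc hx)))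
  obtain ⟨C, hC⟩ := (isCompact_Icc).exists_bound_of_continuousOn hgcont
  -- f r = w r * exp (C r) is monotone on [ε, r₀]
  set f : ℝ → ℝ := fun r => w r * Real.exp (C * r) with hf
  have hfderiv : ∀ r ∈ Ioo ε r₀, HasDerivAt f (w r * (g r + C) * Real.exp (C * r)) r := by
    intro r hr
    have h1 := hderiv r (hIcc ⟨le_of_lt hr.1, le_of_lt hr.2⟩)
    have h2 : HasDerivAt (fun r => Real.exp (C * r)) (C * Real.exp (C * r)) r := by
      have := ((hasDerivAt_id r).const_mul C).exp
      simpa [mul_comm] using this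
    have : HasDerivAt (fun y => w y * Real.exp (C * y)) (w r * g r * Real.exp (C * r) + w r * (C * Real.exp (C * r))) r := h1.mul h2
    convert this using 1
    ring
  have hmono : MonotoneOn f (Icc ε r₀) := by
    apply monotoneOn_of_deriv_nonneg (convex_Icc ε r₀)
    · exact (hwcont.mono hIcc).mul (Real.continuous_exp.comp (continuous_const.mul continuous_id)).continuousOn
    · intro x hx
      rw [interior_Icc] at hx
      exact (hfderiv x hx).differentiableAt.differentiableWithinAt
    · intro x hx
      rw [interior_Icc] at hx
      rw [(hfderiv x hx).deriv]
      have hwx : 0 < w x := hwpos x (lt_trans hεpos hx.1) hx.2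
      have hgx : -C ≤ g x := by
        have := hC x ⟨le_of_lt hx.1, le_of_lt hx.2⟩
        rw [Real.norm_eq_abs, abs_le] at this
        linarith [this.1]
      have : 0 ≤ g x + C := by linarith
      positivity
  have hle : f ε ≤ f r₀ := hmono ⟨le_rfl, le_of_lt hεlt⟩ ⟨le_of_lt hεlt, le_rfl⟩ (le_of_lt hεlt)
  have hfε : 0 < f ε := by
    have := Real.exp_pos (C * ε)
    positivity
  have hfr₀ : f r₀ ≤ 0 := by
    have := Real.exp_pos (C * r₀)
    rw [hf]
    exact mul_nonpos_of_nonpos_of_nonneg hwr₀ (le_of_lt this)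
  linarith
end
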